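/- Let S∞(ℚ) be the group of all permutations of ℚ, equipped with the topology of pointwise convergence, and let H = Aut(ℚ,<) = {σ ∈ S∞(ℚ) | σ is strictly increasing for the usual order on ℚ}. Then H, with the subspace topology, is extremely amenable, and H is maximally extremely amenable in S∞(ℚ): for every subgroup H' of S∞(ℚ) with H ⊆ H' such that H', with the subspace topology, is extremely amenable, one has H' = H. -/

import Mathlib

/-- A topological group `G` is *extremely amenable* if every continuous action of `G`
on a nonempty compact Hausdorff space has a `G`-fixed point. -/
def ExtremelyAmenable (G : Type) [Group G] [TopologicalSpace G] : Prop :=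
  ∀ (X : Type) [TopologicalSpace X] [CompactSpace X] [T2Space X] [Nonempty X]
    [MulAction G X] [ContinuousSMul G X], ∃ x : X, ∀ g : G, g • x = x

/-- The pair `(G, H)` is *relatively extremely amenable* if every continuous action of `G`
on a nonempty compact Hausdorff space has a point fixed by every element of `H`. -/
def RelativelyExtremelyAmenable (G : Type) [Group G] [TopologicalSpace G] (H : Subgroup G) :
    Prop :=
  ∀ (X : Type) [TopologicalSpace X] [CompactSpace X] [T2Space X] [Nonempty X]
    [MulAction G X] [ContinuousSMul G X], ∃ x : X, ∀ h ∈ H, h • x = x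
/-- The topology of pointwise convergence on the permutation group of a set `α`
(`α` being given the discrete topology): the topology induced by the embedding
`σ ↦ (σ, σ⁻¹)` into `(α → α) × (α → α)`. -/
def permPointwiseTopology (α : Type) : TopologicalSpace (Equiv.Perm α) :=
  letI : TopologicalSpace α := ⊥
  TopologicalSpace.induced
    (fun σ : Equiv.Perm α => ((⇑σ, ⇑σ.symm) : (α → α) × (α → α))) inferInstance

/-- The subgroup of the permutation group of a linear order `α` consisting of the
permutations that are strictly increasing. -/
def strictMonoPerms (α : Type) [LinearOrder α] : Subgroup (Equiv.Perm α) where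
  carrier := {σ : Equiv.Perm α | StrictMono ⇑σ}
  one_mem' := fun _ _ h => h
  mul_mem' := fun ha hb _ _ h => ha (hb h)
  inv_mem' := by
    intro a ha x y hxy
    have h := ha.lt_iff_lt (a := a⁻¹ x) (b := a⁻¹ y)
    rw [Equiv.Perm.coe_inv, Equiv.apply_symm_apply, Equiv.apply_symm_apply] at h
    exact h.mp hxy

noncomputable instance : TopologicalSpace (Equiv.Perm ℚ) := permPointwiseTopology ℚ


open Set

lemma ramsey_step {κ : Type} (n : ℕ) (c : Finset ℕ → κ)
    (IH : ∀ (S : Set ℕ), S.Infinite → ∀ c' : Finset ℕ → κ,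
      ∃ T, T ⊆ S ∧ T.Infinite ∧ ∃ k, ∀ t : Finset ℕ, ↑t ⊆ T → t.card = n → c' t = k)
    (S' : Set ℕ) (hS' : S'.Infinite) :
    ∃ (a : ℕ) (T : Set ℕ) (k : κ), a ∈ S' ∧ T ⊆ S' ∧ T.Infinite ∧ (∀ x ∈ T, a < x) ∧
      ∀ t : Finset ℕ, ↑t ⊆ T → t.card = n → c (insert a t) = k := by
  obtain ⟨a, ha⟩ := hS'.nonempty
  have h2 : (S' \ Set.Iic a).Infinite := hS'.diff (Set.finite_Iic a)
  obtain ⟨T, hTsub, hTinf, k, hk⟩ := IH _ h2 (fun t => c (insert a t))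
  exact ⟨a, T, k, ha, fun x hx => (hTsub hx).1, hTinf,
    fun x hx => lt_of_not_ge fun h => (hTsub hx).2 h, hk⟩

lemma ramsey_aux {κ : Type} [Finite κ] [Nonempty κ] :
    ∀ (n : ℕ) (S : Set ℕ), S.Infinite → ∀ (c : Finset ℕ → κ),
    ∃ T, T ⊆ S ∧ T.Infinite ∧ ∃ k, ∀ t : Finset ℕ, ↑t ⊆ T → t.card = n → c t = k := by
  intro n
  induction n with
  | zero =>
    intro S hS c
    refine ⟨S, subset_rfl, hS, c ∅, fun t ht hc => ?_⟩
    rw [Finset.card_eq_zero] at hc; rw [hc]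
  | succ n IH =>
    intro S hS c
    -- dependent choice
    choose a T k ha hsub hinf hlt hcol using
      (fun p : {S' : Set ℕ // S'.Infinite} => ramsey_step n c IH p.1 p.2)
    let f : ℕ → {S' : Set ℕ // S'.Infinite} := fun i => Nat.rec ⟨S, hS⟩ (fun _ p => ⟨T p, hinf p⟩) i
    have hfsucc : ∀ i, (f (i+1)).1 = T (f i) := fun i => rfl
    have hchain : ∀ i, (f (i+1)).1 ⊆ (f i).1 := fun i => hsub (f i)
    have hchain' : ∀ i j, i ≤ j → (f j).1 ⊆ (f i).1 := by
      intro i j hij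
      induction j with
      | zero => rw [Nat.le_zero.mp hij]
      | succ j IH2 =>
        rcases Nat.lt_or_ge i (j+1) with h | h
        · exact ((hchain j).trans (IH2 (Nat.lt_succ_iff.mp h)))
        · rw [Nat.le_antisymm hij h]
    set A : ℕ → ℕ := fun i => a (f i) with hA
    have hmemA : ∀ i, A i ∈ (f i).1 := fun i => ha (f i)
    have hAmono : StrictMono A := by
      apply strictMono_nat_of_lt_succ
      intro i
      exact hlt (f i) _ (hmemA (i+1))
    have hmem' : ∀ i j, i < j → A j ∈ (f (i+1)).1 :=
      fun i j hij => hchain' (i+1) j hij (hmemA j)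
    obtain ⟨k₀, hk₀⟩ := Finite.exists_infinite_fiber (fun i => k (f i))
    have hI : ((fun i => k (f i)) ⁻¹' {k₀}).Infinite := Set.infinite_coe_iff.mp hk₀
    refine ⟨A '' ((fun i => k (f i)) ⁻¹' {k₀}), ?_, hI.image (hAmono.injective.injOn), k₀, ?_⟩
    · rintro x ⟨i, _, rfl⟩
      exact hchain' 0 i (Nat.zero_le i) (hmemA i)
    · intro t ht hcard
      have hne : t.Nonempty := Finset.card_pos.mp (by omega)
      obtain ⟨i, hi, hAi⟩ := ht (t.min'_mem hne)
      have herase : ∀ x ∈ t.erase (A i), x ∈ (f (i+1)).1 := by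
        intro x hx
        obtain ⟨j, _, rfl⟩ := ht (Finset.mem_of_mem_erase hx)
        have hxm : A i < A j := by
          rw [hAi]
          exact lt_of_le_of_ne (t.min'_le _ (Finset.mem_of_mem_erase hx))
            (fun h => Finset.ne_of_mem_erase hx (by rw [← h, hAi]))
        exact hmem' i j (hAmono.lt_iff_lt.mp hxm)
      have hAit : A i ∈ t := by rw [hAi]; exact t.min'_mem hne
      have h1 : c (insert (a (f i)) (t.erase (A i))) = k (f i) := by
        apply hcol (f i) _ _ (by rw [Finset.card_erase_of_mem hAit]; omega)
        rw [← hfsucc i]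
        exact fun x hx => herase x hx
      have h2 : insert (a (f i)) (t.erase (A i)) = t := Finset.insert_erase hAit
      rw [← h2, h1]
      exact hi

/-- Ramsey for finite subsets of ℚ -/
lemma ramsey_Q {κ : Type} [Finite κ] [Nonempty κ] (n N : ℕ) (c : Finset ℚ → κ) :
    ∃ (C : Finset ℚ) (k : κ), C.card = N ∧ ∀ t ⊆ C, t.card = n → c t = k := by
  classical
  let e : ℕ ≃ ℚ := (Denumerable.eqv ℚ).symm
  obtain ⟨T, _, hTinf, k, hk⟩ := ramsey_aux n Set.univ Set.infinite_univ
    (fun s : Finset ℕ => c (s.image e))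
  obtain ⟨t₀, ht₀T, ht₀card⟩ := hTinf.exists_subset_card_eq N
  refine ⟨t₀.image e, k, by rw [Finset.card_image_of_injective _ e.injective, ht₀card], ?_⟩
  intro t htsub htcard
  have hst : (t.image e.symm).image e = t := by
    rw [Finset.image_image]
    simp
  rw [← hst]
  apply hk
  · intro x hx
    simp only [Finset.coe_image, Set.mem_image] at hx
    obtain ⟨y, hy, rfl⟩ := hx
    have := htsub hy
    simp only [Finset.mem_image] at this
    obtain ⟨z, hz, rfl⟩ := this
    simpa using ht₀T hz
  · rw [Finset.card_image_of_injective _ e.symm.injective, htcard]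
open Order Order.PartialIso

/-- Any order-preserving matching of two finite subsets of ℚ (given via their increasing
enumerations) extends to an order automorphism of ℚ. -/
lemma exists_strictMonoPerm_image (s t : Finset ℚ) (hst : s.card = t.card) :
    ∃ g : Equiv.Perm ℚ, StrictMono ⇑g ∧ s.image ⇑g = t := by
  classical
  set n := s.card with hn
  have hs : s.card = n := rfl
  have ht : t.card = n := hst.symm
  set u : Fin n ↪o ℚ := s.orderEmbOfFin hs with hu
  set v : Fin n ↪o ℚ := t.orderEmbOfFin ht with hv
  -- the starting partial isomorphism
  have hf₀ : ∀ p ∈ (Finset.univ : Finset (Fin n)).image (fun i => (u i, v i)),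
      ∀ q ∈ (Finset.univ : Finset (Fin n)).image (fun i => (u i, v i)),
      cmp p.1 q.1 = cmp p.2 q.2 := by
    intro p hp q hq
    simp only [Finset.mem_image] at hp hq
    obtain ⟨i, -, rfl⟩ := hp
    obtain ⟨j, -, rfl⟩ := hq
    rw [u.strictMono.cmp_map_eq, v.strictMono.cmp_map_eq]
  set f₀ : PartialIso ℚ ℚ := ⟨(Finset.univ : Finset (Fin n)).image (fun i => (u i, v i)), hf₀⟩
    with hf₀def
  -- the back-and-forth ideal starting at f₀
  let to_cofinal : ℚ ⊕ ℚ → Cofinal (PartialIso ℚ ℚ) := fun p =>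
    Sum.recOn p (definedAtLeft ℚ) (definedAtRight ℚ)
  let our_ideal : Ideal (PartialIso ℚ ℚ) := idealOfCofinals f₀ to_cofinal
  let F := fun a => funOfIdeal a our_ideal (cofinal_meets_idealOfCofinals _ to_cofinal (Sum.inl a))
  let G := fun b => invOfIdeal b our_ideal (cofinal_meets_idealOfCofinals _ to_cofinal (Sum.inr b))
  let e : ℚ ≃o ℚ := OrderIso.ofCmpEqCmp (fun a => (F a).val) (fun b => (G b).val) fun a b => by
    rcases (F a).prop with ⟨f, hf, ha⟩
    rcases (G b).prop with ⟨g, hg, hb⟩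
    rcases our_ideal.directed _ hf _ hg with ⟨m, _, fm, gm⟩
    exact m.prop (a, _) (fm ha) (_, b) (gm hb)
  have key : ∀ i : Fin n, e (u i) = v i := by
    intro i
    rcases (F (u i)).prop with ⟨f, hf, ha⟩
    have h0 : f₀ ∈ our_ideal := mem_idealOfCofinals f₀ to_cofinal
    rcases our_ideal.directed _ hf _ h0 with ⟨m, _, fm, gm⟩
    have hm1 : ((u i : ℚ), (F (u i)).val) ∈ m.val := fm ha
    have hm2 : ((u i : ℚ), v i) ∈ m.val := gm (by
      simp only [hf₀def, Finset.mem_image]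
      exact ⟨i, Finset.mem_univ i, rfl⟩)
    have h := m.prop _ hm1 _ hm2
    simp only [cmp_self_eq_eq] at h
    exact cmp_eq_eq_iff _ _ |>.mp h.symm
  refine ⟨e.toEquiv, e.strictMono, ?_⟩
  apply Finset.eq_of_subset_of_card_le
  · intro x hx
    simp only [Finset.mem_image] at hx
    obtain ⟨a, ha, rfl⟩ := hx
    have : a ∈ Set.range u := by rw [hu, Finset.range_orderEmbOfFin]; exact ha
    obtain ⟨i, hi⟩ := this
    rw [← hi]
    show e (u i) ∈ t
    rw [key i]
    exact t.orderEmbOfFin_mem ht i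
  · rw [Finset.card_image_of_injective _ e.toEquiv.injective, hs, ht]

section TopoLemmas

def tQ : TopologicalSpace ℚ := ⊥
def tPi : TopologicalSpace (ℚ → ℚ) := @Pi.topologicalSpace ℚ (fun _ => ℚ) (fun _ => tQ)
def tP : TopologicalSpace ((ℚ → ℚ) × (ℚ → ℚ)) := @instTopologicalSpaceProd _ _ tPi tPi

abbrev permEmb : Equiv.Perm ℚ → (ℚ → ℚ) × (ℚ → ℚ) := fun σ => (⇑σ, ⇑σ.symm)

lemma perm_top_eq :
    (inferInstance : TopologicalSpace (Equiv.Perm ℚ)) = TopologicalSpace.induced permEmb tP :=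
  rfl

lemma tQ_discrete : @DiscreteTopology ℚ tQ := @discreteTopology_bot ℚ

lemma isOpen_eval (a c : ℚ) : IsOpen {g : Equiv.Perm ℚ | g a = c} := by
  suffices h : @IsOpen _ (TopologicalSpace.induced permEmb tP) {g : Equiv.Perm ℚ | g a = c} by
    exact h
  rw [@isOpen_induced_iff _ _ tP _ permEmb]
  refine ⟨{p | p.1 a = c}, ?_, rfl⟩
  have h1 : @Continuous _ _ tP tQ (fun p : (ℚ → ℚ) × (ℚ → ℚ) => p.1 a) :=
    @Continuous.comp _ _ _ tP tPi tQ _ _ (@continuous_apply ℚ (fun _ => ℚ) (fun _ => tQ) a)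
      (@continuous_fst _ _ tPi tPi)
  exact @IsOpen.preimage _ _ tP tQ _ h1 {c} (@isOpen_discrete _ tQ tQ_discrete _)

lemma isOpen_eval_symm (a c : ℚ) : IsOpen {g : Equiv.Perm ℚ | g.symm a = c} := by
  suffices h : @IsOpen _ (TopologicalSpace.induced permEmb tP) {g : Equiv.Perm ℚ | g.symm a = c} by
    exact h
  rw [@isOpen_induced_iff _ _ tP _ permEmb]
  refine ⟨{p | p.2 a = c}, ?_, rfl⟩
  have h1 : @Continuous _ _ tP tQ (fun p : (ℚ → ℚ) × (ℚ → ℚ) => p.2 a) :=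
    @Continuous.comp _ _ _ tP tPi tQ _ _ (@continuous_apply ℚ (fun _ => ℚ) (fun _ => tQ) a)
      (@continuous_snd _ _ tPi tPi)
  exact @IsOpen.preimage _ _ tP tQ _ h1 {c} (@isOpen_discrete _ tQ tQ_discrete _)

lemma perm_nhds_one {S : Set (Equiv.Perm ℚ)} (hS : S ∈ nhds (1 : Equiv.Perm ℚ)) :
    ∃ A : Finset ℚ, {g : Equiv.Perm ℚ | ∀ a ∈ A, g a = a} ⊆ S := by
  obtain ⟨U, hUS, hUopen, h1U⟩ := mem_nhds_iff.mp hS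
  have hUopen' : @IsOpen _ (TopologicalSpace.induced permEmb tP) U := hUopen
  rw [@isOpen_induced_iff _ _ tP _ permEmb] at hUopen'
  obtain ⟨t, htopen, ht⟩ := hUopen'
  subst ht
  have h1t : permEmb 1 ∈ t := h1U
  obtain ⟨t₁, t₂, ht₁, ht₂, hm₁, hm₂, hsub⟩ :=
    (@isOpen_prod_iff _ _ tPi tPi t).mp htopen _ _ h1t
  obtain ⟨I₁, u₁, hu₁, hpi₁⟩ :=
    (@isOpen_pi_iff ℚ (fun _ => ℚ) (fun _ => tQ) t₁).mp ht₁ _ hm₁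
  obtain ⟨I₂, u₂, hu₂, hpi₂⟩ :=
    (@isOpen_pi_iff ℚ (fun _ => ℚ) (fun _ => tQ) t₂).mp ht₂ _ hm₂
  refine ⟨I₁ ∪ I₂, fun g hg => ?_⟩
  have hfix : ∀ a ∈ I₁ ∪ I₂, g a = a := hg
  have hsymmfix : ∀ a, g a = a → g.symm a = a := by
    intro a h
    conv_lhs => rw [← h]
    exact g.symm_apply_apply a
  apply hUS
  refine hsub ⟨hpi₁ fun a ha => ?_, hpi₂ fun a ha => ?_⟩
  · have : g a = a := hfix a (Finset.mem_union_left _ ha)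
    show ⇑g a ∈ u₁ a
    rw [this]
    exact (hu₁ a ha).2
  · have : g a = a := hfix a (Finset.mem_union_right _ ha)
    show ⇑g.symm a ∈ u₂ a
    rw [hsymmfix a this]
    exact (hu₂ a ha).2

lemma subgroup_nhds_one (H' : Subgroup (Equiv.Perm ℚ)) {U : Set ↥H'}
    (hU : U ∈ nhds (1 : ↥H')) :
    ∃ A : Finset ℚ, {u : ↥H' | ∀ a ∈ A, (u : Equiv.Perm ℚ) a = a} ⊆ U := by
  rw [nhds_induced] at hU
  obtain ⟨S, hS, hsub⟩ := hU
  obtain ⟨A, hA⟩ := perm_nhds_one (by exact hS)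
  exact ⟨A, fun u hu => hsub (hA hu)⟩

lemma isOpen_subgroup_eval (H' : Subgroup (Equiv.Perm ℚ)) (a c : ℚ) :
    IsOpen {u : ↥H' | (u : Equiv.Perm ℚ) a = c} :=
  (isOpen_eval a c).preimage continuous_subtype_val

lemma isOpen_subgroup_eval_inv (H' : Subgroup (Equiv.Perm ℚ)) (a c : ℚ) :
    IsOpen {u : ↥H' | ((u : Equiv.Perm ℚ))⁻¹ a = c} :=
  (isOpen_eval_symm a c).preimage continuous_subtype_val

end TopoLemmas

lemma agree_of_strictMono_image {A : Finset ℚ} {f g : ℚ → ℚ}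
    (hf : StrictMono f) (hg : StrictMono g) (h : A.image f = A.image g) :
    ∀ a ∈ A, f a = g a := by
  have hcardf : (A.image f).card = A.card := Finset.card_image_of_injective _ hf.injective
  have hcardg : (A.image g).card = A.card := Finset.card_image_of_injective _ hg.injective
  have h1 : (fun i : Fin A.card => f (A.orderEmbOfFin rfl i)) = (A.image f).orderEmbOfFin hcardf :=
    Finset.orderEmbOfFin_unique hcardf
      (fun i => Finset.mem_image_of_mem f (Finset.orderEmbOfFin_mem A rfl i))
      (hf.comp (A.orderEmbOfFin rfl).strictMono)
  have h2 : (fun i : Fin A.card => g (A.orderEmbOfFin rfl i)) = (A.image g).orderEmbOfFin hcardg :=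
    Finset.orderEmbOfFin_unique hcardg
      (fun i => Finset.mem_image_of_mem g (Finset.orderEmbOfFin_mem A rfl i))
      (hg.comp (A.orderEmbOfFin rfl).strictMono)
  have key : ∀ (s t : Finset ℚ) (_ : s = t) (hs : s.card = A.card) (ht : t.card = A.card)
      (i : Fin A.card), s.orderEmbOfFin hs i = t.orderEmbOfFin ht i := by
    rintro s t rfl hs ht i; rfl
  intro a ha
  have : a ∈ Set.range (A.orderEmbOfFin rfl) := by
    rw [Finset.range_orderEmbOfFin]; exact ha
  obtain ⟨i, rfl⟩ := this
  calc f ((A.orderEmbOfFin rfl) i) = (A.image f).orderEmbOfFin hcardf i := congrFun h1 i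
    _ = (A.image g).orderEmbOfFin hcardg i := key _ _ h _ _ i
    _ = g ((A.orderEmbOfFin rfl) i) := (congrFun h2 i).symm
section MainEA

lemma mem_strictMonoPerms {g : Equiv.Perm ℚ} (h : StrictMono ⇑g) : g ∈ strictMonoPerms ℚ := h

lemma strictMono_coe (u : ↥(strictMonoPerms ℚ)) : StrictMono ⇑(u : Equiv.Perm ℚ) := u.2

theorem extremelyAmenable_autQ : ExtremelyAmenable ↥(strictMonoPerms ℚ) := by
  classical
  intro X _ _ _ _ _ _
  letI : UniformSpace X := uniformSpaceOfCompactR1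
  obtain ⟨x₀⟩ := ‹Nonempty X›
  -- Step 1: the approximate fixed point property
  have core : ∀ (F : Finset ↥(strictMonoPerms ℚ)), ∀ V ∈ uniformity X,
      ∃ x : X, ∀ g ∈ F, (g • x, x) ∈ V := by
    intro F V hV
    obtain ⟨W₁, hW₁, hW₁symm, hW₁sub⟩ := comp_symm_mem_uniformity_sets hV
    obtain ⟨W, hW, hWsymm, hWsub⟩ := comp_symm_mem_uniformity_sets hW₁
    -- uniform equicontinuity of the action near 1
    have equi : ∃ A : Finset ℚ, ∀ u : ↥(strictMonoPerms ℚ),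
        (∀ a ∈ A, ((u : Equiv.Perm ℚ)) a = a) → ∀ x : X, (u • x, x) ∈ W := by
      obtain ⟨W', ⟨hW'u, hW'open⟩, hW'sub⟩ := uniformity_hasBasis_open.mem_iff.mp hW
      have hcont : Continuous (fun p : ↥(strictMonoPerms ℚ) × X => ((p.1 • p.2 : X), p.2)) :=
        continuous_smul.prodMk continuous_snd
      have hO : IsOpen ((fun p : ↥(strictMonoPerms ℚ) × X => ((p.1 • p.2 : X), p.2)) ⁻¹' W') :=
        hW'open.preimage hcont
      have hsub0 : ({(1 : ↥(strictMonoPerms ℚ))} : Set _) ×ˢ (Set.univ : Set X) ⊆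
          (fun p : ↥(strictMonoPerms ℚ) × X => ((p.1 • p.2 : X), p.2)) ⁻¹' W' := by
        rintro ⟨u, x⟩ ⟨hu, -⟩
        simp only [Set.mem_singleton_iff] at hu
        subst hu
        simp only [Set.mem_preimage, one_smul]
        exact refl_mem_uniformity hW'u
      obtain ⟨u, v, huopen, -, h1u, hunivv, huv⟩ :=
        generalized_tube_lemma isCompact_singleton isCompact_univ hO hsub0
      have humem : u ∈ nhds (1 : ↥(strictMonoPerms ℚ)) :=
        huopen.mem_nhds (h1u rfl)
      obtain ⟨A, hA⟩ := subgroup_nhds_one (strictMonoPerms ℚ) humem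
      refine ⟨A, fun g hg x => ?_⟩
      apply hW'sub
      exact huv (Set.mk_mem_prod (hA hg) (hunivv (Set.mem_univ x)))
    obtain ⟨A, hA⟩ := equi
    set n := A.card with hn
    -- finite cover by W-balls
    obtain ⟨t, ht⟩ := isCompact_univ.elim_nhds_subcover (fun y : X => UniformSpace.ball y W)
      (fun y _ => UniformSpace.ball_mem_nhds y hW)
    have hcover : ∀ x : X, ∃ y ∈ t, (y, x) ∈ W := by
      intro x
      have := ht.2 (Set.mem_univ x)
      simp only [Set.mem_iUnion] at this
      obtain ⟨y, hy, hball⟩ := this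
      exact ⟨y, hy, hball⟩
    -- the coloring of n-element subsets of ℚ
    have hKne : Nonempty {y : X // y ∈ t} := by
      obtain ⟨y, hy, -⟩ := hcover x₀; exact ⟨⟨y, hy⟩⟩
    choose gD hgDmono hgDim using
      (fun D : {D : Finset ℚ // D.card = n} =>
        exists_strictMonoPerm_image A D.1 (by rw [D.2]))
    choose yD hyDt hyDball using
      (fun D : {D : Finset ℚ // D.card = n} => hcover
        ((⟨gD D, mem_strictMonoPerms (hgDmono D)⟩ : ↥(strictMonoPerms ℚ))⁻¹ • x₀))
    set c : Finset ℚ → {y : X // y ∈ t} :=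
      fun D => if h : D.card = n then ⟨yD ⟨D, h⟩, hyDt ⟨D, h⟩⟩ else Classical.arbitrary _
      with hc
    -- apply Ramsey
    set B : Finset ℚ := A ∪ F.biUnion (fun g => A.image ⇑((g : Equiv.Perm ℚ)⁻¹)) with hB
    obtain ⟨C, k, hCcard, hCk⟩ := ramsey_Q n B.card c
    obtain ⟨h0, hh0, him⟩ := exists_strictMonoPerm_image B C hCcard.symm
    set φ : ↥(strictMonoPerms ℚ) := ⟨h0, mem_strictMonoPerms hh0⟩ with hφ
    refine ⟨φ⁻¹ • x₀, fun g hg => ?_⟩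
    set p : ↥(strictMonoPerms ℚ) := φ * g⁻¹ with hp
    -- the two n-subsets of C
    set D₁ : Finset ℚ := A.image ⇑h0 with hD₁
    set D₂ : Finset ℚ := A.image ⇑(p : Equiv.Perm ℚ) with hD₂
    have hD₁n : D₁.card = n := Finset.card_image_of_injective _ hh0.injective
    have hD₂n : D₂.card = n :=
      Finset.card_image_of_injective _ (strictMono_coe p).injective
    have hD₁C : D₁ ⊆ C := by
      rw [← him]
      exact Finset.image_subset_image (Finset.subset_union_left)
    have hD₂C : D₂ ⊆ C := by
      have hcoe : ⇑(p : Equiv.Perm ℚ) = ⇑h0 ∘ ⇑((g : Equiv.Perm ℚ)⁻¹) := by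
        funext a
        simp [hp, hφ, Equiv.Perm.mul_apply]
      rw [hD₂, hcoe, ← Finset.image_image, ← him]
      apply Finset.image_subset_image
      intro x hxmem
      rw [hB]
      exact Finset.mem_union_right _ (Finset.mem_biUnion.mpr ⟨g, hg, hxmem⟩)
    -- the colors agree
    have hcol : c D₁ = c D₂ := by rw [hCk D₁ hD₁C hD₁n, hCk D₂ hD₂C hD₂n]
    have hyeq : yD ⟨D₁, hD₁n⟩ = yD ⟨D₂, hD₂n⟩ := by
      have := congrArg Subtype.val hcol
      simpa only [hc, dif_pos hD₁n, dif_pos hD₂n] using this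
    -- translate agreement on A into entourage estimates
    set ψ₁ : ↥(strictMonoPerms ℚ) := ⟨gD ⟨D₁, hD₁n⟩, mem_strictMonoPerms (hgDmono _)⟩ with hψ₁
    set ψ₂ : ↥(strictMonoPerms ℚ) := ⟨gD ⟨D₂, hD₂n⟩, mem_strictMonoPerms (hgDmono _)⟩ with hψ₂
    have agree₁ : ∀ a ∈ A, (ψ₁ : Equiv.Perm ℚ) a = h0 a :=
      agree_of_strictMono_image (hgDmono _) hh0 (by rw [hgDim ⟨D₁, hD₁n⟩])
    have agree₂ : ∀ a ∈ A, (ψ₂ : Equiv.Perm ℚ) a = (p : Equiv.Perm ℚ) a :=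
      agree_of_strictMono_image (hgDmono _) (strictMono_coe p) (by rw [hgDim ⟨D₂, hD₂n⟩])
    have est₁ : ((ψ₁⁻¹ • x₀ : X), (φ⁻¹ • x₀ : X)) ∈ W := by
      have hfix : ∀ a ∈ A, ((ψ₁⁻¹ * φ : ↥(strictMonoPerms ℚ)) : Equiv.Perm ℚ) a = a := by
        intro a ha
        have : ((ψ₁⁻¹ * φ : ↥(strictMonoPerms ℚ)) : Equiv.Perm ℚ) a =
            ((ψ₁ : Equiv.Perm ℚ))⁻¹ ((φ : Equiv.Perm ℚ) a) := by
          simp [Equiv.Perm.mul_apply]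
        rw [this, ← agree₁ a ha]
        exact Equiv.symm_apply_apply _ _
      have := hA (ψ₁⁻¹ * φ) hfix (φ⁻¹ • x₀)
      rwa [smul_smul, mul_assoc, mul_inv_cancel, mul_one] at this
    have est₂ : ((ψ₂⁻¹ • x₀ : X), (g • (φ⁻¹ • x₀) : X)) ∈ W := by
      have hfix : ∀ a ∈ A, ((ψ₂⁻¹ * p : ↥(strictMonoPerms ℚ)) : Equiv.Perm ℚ) a = a := by
        intro a ha
        have : ((ψ₂⁻¹ * p : ↥(strictMonoPerms ℚ)) : Equiv.Perm ℚ) a =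
            ((ψ₂ : Equiv.Perm ℚ))⁻¹ ((p : Equiv.Perm ℚ) a) := by
          simp [Equiv.Perm.mul_apply]
        rw [this, ← agree₂ a ha]
        exact Equiv.symm_apply_apply _ _
      have := hA (ψ₂⁻¹ * p) hfix (p⁻¹ • x₀)
      have hps : (p⁻¹ • x₀ : X) = g • (φ⁻¹ • x₀) := by
        rw [hp, mul_inv_rev, inv_inv, smul_smul]
      rwa [smul_smul, mul_assoc, mul_inv_cancel, mul_one, hps] at this
    have ball₁ : (yD ⟨D₁, hD₁n⟩, (ψ₁⁻¹ • x₀ : X)) ∈ W := hyDball ⟨D₁, hD₁n⟩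
    have ball₂ : (yD ⟨D₂, hD₂n⟩, (ψ₂⁻¹ • x₀ : X)) ∈ W := hyDball ⟨D₂, hD₂n⟩
    -- chain the estimates
    apply hW₁sub
    refine SetRel.prodMk_mem_comp (b := yD ⟨D₁, hD₁n⟩) (hWsub ?_) (hWsub ?_)
    · refine SetRel.prodMk_mem_comp (b := ψ₂⁻¹ • x₀) (Std.Symm.symm (self := hWsymm) _ _ est₂) ?_
      rw [← hyeq] at ball₂
      exact Std.Symm.symm (self := hWsymm) _ _ ball₂
    · exact SetRel.prodMk_mem_comp (b := ψ₁⁻¹ • x₀) ball₁ est₁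
  -- Step 2: compactness gives a common fixed point
  let ι := Finset ↥(strictMonoPerms ℚ) × {V : Set (X × X) // V ∈ uniformity X ∧ IsClosed V}
  haveI : Nonempty ι := ⟨(∅, ⟨Set.univ, Filter.univ_mem, isClosed_univ⟩)⟩
  let Z : ι → Set X := fun i => {x | ∀ g ∈ i.1, (g • x, x) ∈ i.2.1}
  have hZclosed : ∀ i, IsClosed (Z i) := by
    intro i
    have hZeq : Z i = ⋂ g ∈ i.1, (fun x : X => ((g • x : X), x)) ⁻¹' i.2.1 := by
      ext x; simp [Z]
    rw [hZeq]
    refine isClosed_biInter (fun g _ => i.2.2.2.preimage ?_)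
    exact (continuous_const_smul _).prodMk continuous_id
  have hZdir : Directed (· ⊇ ·) Z := by
    intro i j
    refine ⟨(i.1 ∪ j.1, ⟨i.2.1 ∩ j.2.1, Filter.inter_mem i.2.2.1 j.2.2.1,
      i.2.2.2.inter j.2.2.2⟩), fun x hx g hgi => ?_, fun x hx g hgj => ?_⟩
    · exact (hx g (Finset.mem_union_left _ hgi)).1
    · exact (hx g (Finset.mem_union_right _ hgj)).2
  have hZne : ∀ i, (Z i).Nonempty := by
    intro i
    obtain ⟨x, hx⟩ := core i.1 i.2.1 i.2.2.1
    exact ⟨x, hx⟩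
  obtain ⟨x, hx⟩ := IsCompact.nonempty_iInter_of_directed_nonempty_isCompact_isClosed Z hZdir hZne
    (fun i => (hZclosed i).isCompact) hZclosed
  refine ⟨x, fun g => ?_⟩
  have hmem : ∀ V ∈ uniformity X, (g • x, x) ∈ V := by
    intro V hV
    obtain ⟨V', ⟨hV'u, hV'c⟩, hV'sub⟩ := uniformity_hasBasis_closed.mem_iff.mp hV
    apply hV'sub
    have := Set.mem_iInter.mp hx ({g}, ⟨V', hV'u, hV'c⟩)
    exact this g (Finset.mem_singleton_self g)
  have hclos : (g • x : X) ∈ closure ({x} : Set X) := by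
    rw [mem_closure_iff]
    intro o ho hgo
    obtain ⟨V, hVu, hball⟩ := UniformSpace.mem_nhds_iff.mp (ho.mem_nhds hgo)
    exact ⟨x, hball (hmem V hVu), rfl⟩
  rwa [closure_singleton, Set.mem_singleton_iff] at hclos

end MainEA
section Maximality

/-- The compact space of (strict) linear order relations on ℚ, coded as boolean relations. -/
def LOSpace : Type :=
  {r : ℚ → ℚ → Bool // (∀ a, r a a = false) ∧
    (∀ a b c, r a b = true → r b c = true → r a c = true) ∧
    (∀ a b, a ≠ b → (r a b = true ∨ r b a = true))}

instance : TopologicalSpace LOSpace := instTopologicalSpaceSubtype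

instance : T2Space LOSpace := by unfold LOSpace; infer_instance

instance : Nonempty LOSpace := by
  refine ⟨⟨fun a b => decide (a < b), fun a => by simp, fun a b c h1 h2 => ?_, fun a b h => ?_⟩⟩
  · simp only [decide_eq_true_eq] at *
    exact h1.trans h2
  · simp only [decide_eq_true_eq]
    exact lt_or_gt_of_ne h

lemma isClopen_LOeval (a b : ℚ) (v : Bool) : IsClopen {r : ℚ → ℚ → Bool | r a b = v} := by
  have hc : Continuous (fun r : ℚ → ℚ → Bool => r a b) :=
    (continuous_apply b).comp (continuous_apply a)
  have : {r : ℚ → ℚ → Bool | r a b = v} = (fun r : ℚ → ℚ → Bool => r a b) ⁻¹' {v} := rfl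
  rw [this]
  exact (isClopen_discrete {v}).preimage hc

instance : CompactSpace LOSpace := by
  have hclosed : IsClosed {r : ℚ → ℚ → Bool | (∀ a, r a a = false) ∧
      (∀ a b c, r a b = true → r b c = true → r a c = true) ∧
      (∀ a b, a ≠ b → (r a b = true ∨ r b a = true))} := by
    have h1 : IsClosed {r : ℚ → ℚ → Bool | ∀ a, r a a = false} := by
      have : {r : ℚ → ℚ → Bool | ∀ a, r a a = false} =
          ⋂ a, {r : ℚ → ℚ → Bool | r a a = false} := by ext r; simp
      rw [this]
      exact isClosed_iInter fun a => (isClopen_LOeval a a false).isClosed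
    have h2 : IsClosed {r : ℚ → ℚ → Bool |
        ∀ a b c, r a b = true → r b c = true → r a c = true} := by
      have : {r : ℚ → ℚ → Bool | ∀ a b c, r a b = true → r b c = true → r a c = true} =
          ⋂ a, ⋂ b, ⋂ c, ({r : ℚ → ℚ → Bool | r a b = true}ᶜ ∪
            ({r : ℚ → ℚ → Bool | r b c = true}ᶜ ∪ {r : ℚ → ℚ → Bool | r a c = true})) := by
        ext r
        simp only [Set.mem_iInter, Set.mem_union, Set.mem_compl_iff, Set.mem_setOf_eq]
        constructor
        · intro h a b c
          by_cases hab : r a b = true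
          · by_cases hbc : r b c = true
            · exact Or.inr (Or.inr (h a b c hab hbc))
            · exact Or.inr (Or.inl hbc)
          · exact Or.inl hab
        · intro h a b c hab hbc
          rcases h a b c with h' | h' | h'
          · exact absurd hab h'
          · exact absurd hbc h'
          · exact h'
      rw [this]
      refine isClosed_iInter fun a => isClosed_iInter fun b => isClosed_iInter fun c => ?_
      exact (((isClopen_LOeval a b true).compl.isClosed).union
        (((isClopen_LOeval b c true).compl.isClosed).union (isClopen_LOeval a c true).isClosed))
    have h3 : IsClosed {r : ℚ → ℚ → Bool | ∀ a b, a ≠ b → (r a b = true ∨ r b a = true)} := by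
      have : {r : ℚ → ℚ → Bool | ∀ a b, a ≠ b → (r a b = true ∨ r b a = true)} =
          ⋂ a, ⋂ b, {r : ℚ → ℚ → Bool | a ≠ b → (r a b = true ∨ r b a = true)} := by
        ext r; simp
      rw [this]
      refine isClosed_iInter fun a => isClosed_iInter fun b => ?_
      by_cases hab : a = b
      · have : {r : ℚ → ℚ → Bool | a ≠ b → (r a b = true ∨ r b a = true)} = Set.univ := by
          ext r; simp [hab]
        rw [this]; exact isClosed_univ
      · have : {r : ℚ → ℚ → Bool | a ≠ b → (r a b = true ∨ r b a = true)} =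
            {r : ℚ → ℚ → Bool | r a b = true} ∪ {r : ℚ → ℚ → Bool | r b a = true} := by
          ext r; simp [hab]
        rw [this]
        exact (isClopen_LOeval a b true).isClosed.union (isClopen_LOeval b a true).isClosed
    have hsets : {r : ℚ → ℚ → Bool | (∀ a, r a a = false) ∧
        (∀ a b c, r a b = true → r b c = true → r a c = true) ∧
        (∀ a b, a ≠ b → (r a b = true ∨ r b a = true))} =
        {r : ℚ → ℚ → Bool | ∀ a, r a a = false} ∩
        ({r : ℚ → ℚ → Bool | ∀ a b c, r a b = true → r b c = true → r a c = true} ∩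
         {r : ℚ → ℚ → Bool | ∀ a b, a ≠ b → (r a b = true ∨ r b a = true)}) := by
      ext r; simp only [Set.mem_setOf_eq, Set.mem_inter_iff]
    rw [hsets]
    exact h1.inter (h2.inter h3)
  exact isCompact_iff_compactSpace.mp (IsClosed.isCompact hclosed)

/-- The action of permutations on linear order relations. -/
instance : MulAction (Equiv.Perm ℚ) LOSpace where
  smul := fun g r => ⟨fun a b => r.1 (g⁻¹ a) (g⁻¹ b), fun a => r.2.1 _,
    fun a b c h1 h2 => r.2.2.1 _ _ _ h1 h2,
    fun a b h => r.2.2.2 _ _ (fun he => h (g⁻¹.injective he ▸ rfl))⟩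
  one_smul := fun r => by
    apply Subtype.ext
    funext a b
    show r.1 ((1 : Equiv.Perm ℚ)⁻¹ a) ((1 : Equiv.Perm ℚ)⁻¹ b) = r.1 a b
    simp
  mul_smul := fun g h r => by
    apply Subtype.ext
    funext a b
    show r.1 ((g * h)⁻¹ a) ((g * h)⁻¹ b) = r.1 (h⁻¹ (g⁻¹ a)) (h⁻¹ (g⁻¹ b))
    simp [Equiv.Perm.mul_apply]

lemma LOSpace_smul_coe (g : Equiv.Perm ℚ) (r : LOSpace) (a b : ℚ) :
    (g • r).1 a b = r.1 (g⁻¹ a) (g⁻¹ b) := rfl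

lemma continuousSMul_LOSpace (H' : Subgroup (Equiv.Perm ℚ)) :
    ContinuousSMul ↥H' LOSpace := by
  constructor
  apply Continuous.subtype_mk (f := fun p : ↥H' × LOSpace =>
    (fun a b => p.2.1 (((p.1 : Equiv.Perm ℚ))⁻¹ a) (((p.1 : Equiv.Perm ℚ))⁻¹ b)))
  apply continuous_pi; intro a
  apply continuous_pi; intro b
  rw [continuous_iff_continuousAt]
  rintro ⟨u₀, r₀⟩
  set ca := ((u₀ : Equiv.Perm ℚ))⁻¹ a with hca
  set cb := ((u₀ : Equiv.Perm ℚ))⁻¹ b with hcb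
  set v := r₀.1 ca cb with hv
  have hopen : IsOpen (((fun p : ↥H' × LOSpace => p.1) ⁻¹'
        {u : ↥H' | ((u : Equiv.Perm ℚ))⁻¹ a = ca}) ∩
      ((fun p : ↥H' × LOSpace => p.1) ⁻¹' {u : ↥H' | ((u : Equiv.Perm ℚ))⁻¹ b = cb}) ∩
      ((fun p : ↥H' × LOSpace => p.2) ⁻¹' {r : LOSpace | r.1 ca cb = v})) := by
    refine IsOpen.inter (IsOpen.inter ?_ ?_) ?_
    · exact (isOpen_subgroup_eval_inv H' a ca).preimage continuous_fst
    · exact (isOpen_subgroup_eval_inv H' b cb).preimage continuous_fst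
    · refine IsOpen.preimage continuous_snd ?_
      have : {r : LOSpace | r.1 ca cb = v} =
          Subtype.val ⁻¹' {r : ℚ → ℚ → Bool | r ca cb = v} := rfl
      rw [this]
      exact (isClopen_LOeval ca cb v).isOpen.preimage continuous_subtype_val
  unfold ContinuousAt
  have : (fun p : ↥H' × LOSpace =>
      p.2.1 (((p.1 : Equiv.Perm ℚ))⁻¹ a) (((p.1 : Equiv.Perm ℚ))⁻¹ b)) (u₀, r₀) = v := rfl
  rw [this]
  intro S hS
  have hvS : {x : Bool | x = v} ⊆ S := by
    intro x hx
    rw [Set.mem_setOf_eq] at hx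
    rw [hx]
    exact mem_of_mem_nhds hS
  rw [Filter.mem_map]
  apply Filter.mem_of_superset (hopen.mem_nhds ?_)
  · rintro ⟨u, r⟩ ⟨⟨h1, h2⟩, h3⟩
    apply hvS
    simp only [Set.mem_preimage, Set.mem_setOf_eq] at h1 h2 h3 ⊢
    rw [h1, h2, h3]
  · exact ⟨⟨rfl, rfl⟩, rfl⟩

lemma maximality (H' : Subgroup (Equiv.Perm ℚ)) (hle : strictMonoPerms ℚ ≤ H')
    (hEA : ExtremelyAmenable ↥H') : H' = strictMonoPerms ℚ := by
  refine le_antisymm ?_ hle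
  haveI := continuousSMul_LOSpace H'
  obtain ⟨r, hr⟩ := hEA LOSpace
  -- invariance of r under H'
  have hinv : ∀ σ : Equiv.Perm ℚ, σ ∈ H' → ∀ a b : ℚ, r.1 (σ a) (σ b) = r.1 a b := by
    intro σ hσ a b
    have h := hr ⟨σ⁻¹, H'.inv_mem hσ⟩
    have h' := congrArg (fun z : LOSpace => z.1 a b) h
    have h'' : r.1 (((σ⁻¹ : Equiv.Perm ℚ))⁻¹ a) (((σ⁻¹ : Equiv.Perm ℚ))⁻¹ b) = r.1 a b := h'
    simpa using h''
  -- 2-homogeneity: the value of r on increasing pairs is constant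
  have hpair : ∀ x y : ℚ, x < y → r.1 x y = r.1 0 1 := by
    intro x y hxy
    have hc01 : ({0, 1} : Finset ℚ).card = 2 := by decide
    have hcxy : ({x, y} : Finset ℚ).card = 2 := by
      rw [Finset.card_insert_of_notMem (by simp [hxy.ne]), Finset.card_singleton]
    obtain ⟨g, hg, him⟩ := exists_strictMonoPerm_image {0, 1} {x, y} (by rw [hc01, hcxy])
    have himg : ({g 0, g 1} : Finset ℚ) = {x, y} := by
      rw [← him]
      rw [Finset.image_insert, Finset.image_singleton]
    have h01 : g 0 < g 1 := hg (by norm_num)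
    have hg0 : g 0 = x ∧ g 1 = y := by
      have hm0 : g 0 ∈ ({x, y} : Finset ℚ) := by rw [← himg]; simp
      have hm1 : g 1 ∈ ({x, y} : Finset ℚ) := by rw [← himg]; simp
      simp only [Finset.mem_insert, Finset.mem_singleton] at hm0 hm1
      rcases hm0 with h0 | h0 <;> rcases hm1 with h1 | h1
      · rw [h0, h1] at h01; exact absurd h01 (lt_irrefl x)
      · exact ⟨h0, h1⟩
      · rw [h0, h1] at h01; exact absurd hxy (lt_asymm h01)
      · rw [h0, h1] at h01; exact absurd h01 (lt_irrefl y)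
    have := hinv g (hle (mem_strictMonoPerms hg)) 0 1
    rw [hg0.1, hg0.2] at this
    exact this
  -- conclude: every element of H' is strictly monotone
  intro σ hσ
  apply mem_strictMonoPerms
  intro a b hab
  by_cases hc : r.1 0 1 = true
  · -- r is the usual order
    have hlt : ∀ x y : ℚ, r.1 x y = true ↔ x < y := by
      intro x y
      constructor
      · intro h
        rcases lt_trichotomy x y with h' | h' | h'
        · exact h'
        · exact absurd (h' ▸ h) (by rw [r.2.1]; simp)
        · exfalso
          have h2 : r.1 y x = true := by rw [hpair y x h']; exact hc
          have := r.2.2.1 x y x h h2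
          rw [r.2.1] at this
          exact Bool.false_ne_true this
      · intro h; rw [hpair x y h]; exact hc
    have h1 : r.1 a b = true := (hlt a b).mpr hab
    have h2 : r.1 (σ a) (σ b) = true := by rw [hinv σ hσ]; exact h1
    exact (hlt _ _).mp h2
  · -- r is the reversed order
    have hc' : r.1 1 0 = true := by
      rcases r.2.2.2 0 1 (by norm_num) with h | h
      · exact absurd h hc
      · exact h
    have hgt : ∀ x y : ℚ, r.1 x y = true ↔ y < x := by
      intro x y
      constructor
      · intro h
        rcases lt_trichotomy x y with h' | h' | h'
        · exfalso
          have : r.1 x y = r.1 0 1 := hpair x y h'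
          rw [this] at h
          exact hc h
        · exact absurd (h' ▸ h) (by rw [r.2.1]; simp)
        · exact h'
      · intro h
        rcases r.2.2.2 x y (ne_of_gt h) with h2 | h2
        · exact h2
        · exfalso
          have : r.1 y x = r.1 0 1 := hpair y x h
          rw [this] at h2
          exact hc h2
    have h1 : r.1 b a = true := (hgt b a).mpr hab
    have h2 : r.1 (σ b) (σ a) = true := by rw [hinv σ hσ]; exact h1
    exact (hgt _ _).mp h2

end Maximality

/-- `Aut(ℚ, <)`, the group of strictly increasing permutations of `ℚ`, is extremely
amenable (in the subspace topology inherited from `S∞(ℚ)` with the topology of pointwise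
convergence) and is maximally extremely amenable in `S∞(ℚ)`. -/
theorem autQ_maximally_extremelyAmenable :
    ExtremelyAmenable ↥(strictMonoPerms ℚ) ∧
      ∀ H' : Subgroup (Equiv.Perm ℚ), strictMonoPerms ℚ ≤ H' →
        ExtremelyAmenable ↥H' → H' = strictMonoPerms ℚ := by
  exact ⟨extremelyAmenable_autQ, maximality⟩
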